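/- Let H₁ and H₂ be complex Hilbert spaces, T : H₁ → H₂ a bounded linear operator with adjoint T*, α > 0 a real number, and v ∈ H₂. Then the operator αI + TT* on H₂ is boundedly invertible, and u* := T*(αI + TT*)⁻¹ v is the unique minimizer over u ∈ H₁ of the functional u ↦ α‖u‖² + ‖Tu − v‖²; that is, for every u ∈ H₁ one has α‖u*‖² + ‖Tu* − v‖² ≤ α‖u‖² + ‖Tu − v‖², with equality only if u = u*. -/

import Mathlib

open scoped InnerProductSpace

set_option maxHeartbeats 800000 in
private lemma tikhonov_coercive
    {H₁ H₂ : Type*} [NormedAddCommGroup H₁] [InnerProductSpace ℂ H₁] [CompleteSpace H₁]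
    [NormedAddCommGroup H₂] [InnerProductSpace ℂ H₂] [CompleteSpace H₂]
    (T : H₁ →L[ℂ] H₂) (α : ℝ) (hα : 0 < α)
    (A : H₂ →L[ℂ] H₂)
    (hA : A = (α : ℂ) • (1 : H₂ →L[ℂ] H₂) + T ∘L ContinuousLinearMap.adjoint T)
    (x : H₂) : α * ‖x‖ ^ 2 ≤ Complex.re ⟪A x, x⟫_ℂ := by
  set Ts := ContinuousLinearMap.adjoint T with hTs
  have hTT : ⟪T (Ts x), x⟫_ℂ = ⟪Ts x, Ts x⟫_ℂ :=
    (ContinuousLinearMap.adjoint_inner_right T (Ts x) x).symm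
  have h1 : Complex.re ⟪A x, x⟫_ℂ = α * ‖x‖ ^ 2 + ‖Ts x‖ ^ 2 := by
    have hAx : A x = (α : ℂ) • x + T (Ts x) := by rw [hA]; rfl
    rw [hAx, inner_add_left, inner_smul_left, Complex.conj_ofReal, hTT,
      inner_self_eq_norm_sq_to_K, inner_self_eq_norm_sq_to_K]
    norm_cast
    simp [Complex.add_re, Complex.mul_re, ← Complex.ofReal_pow]
  rw [h1]
  nlinarith [sq_nonneg ‖Ts x‖]

set_option maxHeartbeats 800000 in
private lemma tikhonov_isUnit
    {H₁ H₂ : Type*} [NormedAddCommGroup H₁] [InnerProductSpace ℂ H₁] [CompleteSpace H₁]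
    [NormedAddCommGroup H₂] [InnerProductSpace ℂ H₂] [CompleteSpace H₂]
    (T : H₁ →L[ℂ] H₂) (α : ℝ) (hα : 0 < α)
    (A : H₂ →L[ℂ] H₂)
    (hA : A = (α : ℂ) • (1 : H₂ →L[ℂ] H₂) + T ∘L ContinuousLinearMap.adjoint T) :
    IsUnit A := by
  have hcoer := tikhonov_coercive T α hα A hA
  have hbound : ∀ x : H₂, α * ‖x‖ ≤ ‖A x‖ := by
    intro x
    rcases eq_or_ne x 0 with rfl | hx
    · simp
    have h1 : α * ‖x‖ ^ 2 ≤ ‖A x‖ * ‖x‖ := by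
      calc α * ‖x‖ ^ 2 ≤ Complex.re ⟪A x, x⟫_ℂ := hcoer x
        _ ≤ ‖⟪A x, x⟫_ℂ‖ := by
          exact Complex.re_le_norm _
        _ ≤ ‖A x‖ * ‖x‖ := norm_inner_le_norm _ _
    have hxpos : 0 < ‖x‖ := norm_pos_iff.mpr hx
    nlinarith
  have hker : LinearMap.ker (A : H₂ →ₗ[ℂ] H₂) = ⊥ := by
    rw [LinearMap.ker_eq_bot']
    intro x hx
    have h := hbound x
    rw [show A x = 0 from hx, norm_zero] at h
    have hx0 : ‖x‖ ≤ 0 := by nlinarith [norm_nonneg x]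
    exact norm_le_zero_iff.mp hx0
  have hanti : AntilipschitzWith (⟨α, hα.le⟩ : NNReal)⁻¹ A := by
    refine ContinuousLinearMap.antilipschitz_of_bound A (fun x => ?_)
    show ‖x‖ ≤ α⁻¹ * ‖A x‖
    rw [← div_eq_inv_mul]
    rw [le_div_iff₀ hα]
    linarith [hbound x]
  have hclosed : IsClosed (Set.range A) := hanti.isClosed_range A.uniformContinuous
  have hclosed' : IsClosed ((LinearMap.range (A : H₂ →ₗ[ℂ] H₂) : Submodule ℂ H₂) : Set H₂) := by
    rw [LinearMap.coe_range]; exact hclosed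
  haveI : CompleteSpace (LinearMap.range (A : H₂ →ₗ[ℂ] H₂) : Submodule ℂ H₂) := hclosed'.completeSpace_coe
  have hrange : LinearMap.range (A : H₂ →ₗ[ℂ] H₂) = ⊤ := by
    rw [← Submodule.orthogonal_eq_bot_iff]
    rw [Submodule.eq_bot_iff]
    intro x hx
    have h0 : ⟪A x, x⟫_ℂ = 0 := hx (A x) ⟨x, rfl⟩
    have h := hcoer x
    rw [h0, Complex.zero_re] at h
    have h2 : ‖x‖ ^ 2 ≤ 0 := by nlinarith [sq_nonneg ‖x‖]
    have hx0 : ‖x‖ ≤ 0 := by nlinarith [norm_nonneg x]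
    exact norm_le_zero_iff.mp hx0
  exact ⟨(ContinuousLinearEquiv.ofBijective A hker hrange).toUnit,
    ContinuousLinearEquiv.coe_ofBijective A hker hrange⟩

set_option maxHeartbeats 800000 in
private lemma tikhonov_min
    {H₁ H₂ : Type*} [NormedAddCommGroup H₁] [InnerProductSpace ℂ H₁] [CompleteSpace H₁]
    [NormedAddCommGroup H₂] [InnerProductSpace ℂ H₂] [CompleteSpace H₂]
    (T : H₁ →L[ℂ] H₂) (α : ℝ) (hα : 0 < α) (v : H₂) (uStar : H₁)
    (hnormal : (α : ℂ) • uStar + (ContinuousLinearMap.adjoint T) (T uStar - v) = 0)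
    (u : H₁) :
    (α * ‖uStar‖ ^ 2 + ‖T uStar - v‖ ^ 2 ≤ α * ‖u‖ ^ 2 + ‖T u - v‖ ^ 2) ∧
    (α * ‖uStar‖ ^ 2 + ‖T uStar - v‖ ^ 2 = α * ‖u‖ ^ 2 + ‖T u - v‖ ^ 2 → u = uStar) := by
  set w := u - uStar with hw
  have hu : u = uStar + w := by rw [hw]; abel
  clear_value w
  have hcross : α * RCLike.re ⟪uStar, w⟫_ℂ + RCLike.re ⟪T uStar - v, T w⟫_ℂ = 0 := by
    have h1 : ⟪T uStar - v, T w⟫_ℂ = ⟪(ContinuousLinearMap.adjoint T) (T uStar - v), w⟫_ℂ := by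
      rw [ContinuousLinearMap.adjoint_inner_left]
    have h2 : (α : ℂ) * ⟪uStar, w⟫_ℂ + ⟪(ContinuousLinearMap.adjoint T) (T uStar - v), w⟫_ℂ
        = ⟪(α : ℂ) • uStar + (ContinuousLinearMap.adjoint T) (T uStar - v), w⟫_ℂ := by
      rw [inner_add_left, inner_smul_left, Complex.conj_ofReal]
    have h3 : (α : ℂ) * ⟪uStar, w⟫_ℂ
        + ⟪(ContinuousLinearMap.adjoint T) (T uStar - v), w⟫_ℂ = 0 := by
      rw [h2, hnormal, inner_zero_left]
    have h4 := congrArg Complex.re h3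
    simpa [h1, Complex.add_re, Complex.mul_re] using h4
  have hexp : α * ‖u‖ ^ 2 + ‖T u - v‖ ^ 2
      = (α * ‖uStar‖ ^ 2 + ‖T uStar - v‖ ^ 2) + (α * ‖w‖ ^ 2 + ‖T w‖ ^ 2) := by
    have hTu : T u - v = (T uStar - v) + T w := by rw [hu]; simp [map_add]; abel
    have e1 : ‖uStar + w‖ ^ 2 = ‖uStar‖ ^ 2 + 2 * RCLike.re ⟪uStar, w⟫_ℂ + ‖w‖ ^ 2 :=
      norm_add_sq uStar w
    have e2 : ‖(T uStar - v) + T w‖ ^ 2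
        = ‖T uStar - v‖ ^ 2 + 2 * RCLike.re ⟪T uStar - v, T w⟫_ℂ + ‖T w‖ ^ 2 :=
      norm_add_sq _ _
    rw [hTu, hu, e1, e2]
    set r1 := RCLike.re ⟪uStar, w⟫_ℂ
    set r2 := RCLike.re ⟪T uStar - v, T w⟫_ℂ
    set a1 := ‖uStar‖
    set a2 := ‖w‖
    set a3 := ‖T uStar - v‖
    set a4 := ‖T w‖
    clear_value r1 r2 a1 a2 a3 a4
    nlinarith [hcross]
  constructor
  · nlinarith [sq_nonneg ‖w‖, sq_nonneg ‖T w‖]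
  · intro heq
    have h0 : α * ‖w‖ ^ 2 + ‖T w‖ ^ 2 = 0 := by linarith
    have h1 : ‖w‖ ^ 2 = 0 := by nlinarith [sq_nonneg ‖T w‖, sq_nonneg ‖w‖]
    have hw0 : w = 0 := norm_eq_zero.mp (pow_eq_zero_iff two_ne_zero |>.mp h1)
    rw [hw, sub_eq_zero] at hw0
    exact hw0

/-- Tikhonov-regularized least squares: `αI + TT*` is boundedly invertible
and `u* = T*(αI + TT*)⁻¹ v` is the unique minimizer of `u ↦ α‖u‖² + ‖Tu - v‖²`. -/
theorem stmt_0
    {H₁ H₂ : Type*} [NormedAddCommGroup H₁] [InnerProductSpace ℂ H₁] [CompleteSpace H₁]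
    [NormedAddCommGroup H₂] [InnerProductSpace ℂ H₂] [CompleteSpace H₂]
    (T : H₁ →L[ℂ] H₂) (α : ℝ) (hα : 0 < α) (v : H₂)
    (A : H₂ →L[ℂ] H₂)
    (hA : A = (α : ℂ) • (1 : H₂ →L[ℂ] H₂) + T ∘L ContinuousLinearMap.adjoint T)
    (uStar : H₁)
    (huStar : uStar = (ContinuousLinearMap.adjoint T) (Ring.inverse A v)) :
    IsUnit A ∧
    ∀ u : H₁,
      (α * ‖uStar‖ ^ 2 + ‖T uStar - v‖ ^ 2 ≤ α * ‖u‖ ^ 2 + ‖T u - v‖ ^ 2) ∧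
      (α * ‖uStar‖ ^ 2 + ‖T uStar - v‖ ^ 2 = α * ‖u‖ ^ 2 + ‖T u - v‖ ^ 2 → u = uStar) := by
  set Ts := ContinuousLinearMap.adjoint T with hTs
  have hU : IsUnit A := tikhonov_isUnit T α hα A hA
  refine ⟨hU, fun u => ?_⟩
  set y := Ring.inverse A v with hy
  have hAy : A y = v := by
    have h := Ring.mul_inverse_cancel A hU
    calc A y = (A * Ring.inverse A) v := rfl
      _ = v := by rw [h]; rfl
  clear_value y
  have hnormal : (α : ℂ) • uStar + Ts (T uStar - v) = 0 := by
    rw [huStar]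
    have h1 : (α : ℂ) • Ts y + Ts (T (Ts y) - v) = Ts ((α : ℂ) • y + T (Ts y) - v) := by
      simp only [map_sub, map_add, map_smul]
      abel
    rw [h1]
    have h2 : (α : ℂ) • y + T (Ts y) - v = A y - v := by
      rw [hA]
      simp [ContinuousLinearMap.add_apply, ContinuousLinearMap.smul_apply,
        ContinuousLinearMap.comp_apply]
    rw [h2, hAy, sub_self, map_zero]
  exact tikhonov_min T α hα v uStar hnormal u
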